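/- Let G be a finite A-regular simple graph on a nonempty vertex set V (A ≥ 1), let λ > 0 be a real number and let r∞ be a real number with 0 < r∞ ≤ 1. If a function σ : V → ℝ satisfies the traffic equilibrium equations σ(x) = λ + ((1 − r∞)/A) · Σ_{y ∈ N(x)} σ(y) for every vertex x (where N(x) is the neighbor set of x), then σ is the constant function σ(x) = λ/r∞ for all x. Conversely, the constant function with value λ/r∞ satisfies these equations. -/

import Mathlib

/-- On a finite A-regular simple graph (A ≥ 1, nonempty vertex set),
with λ > 0 and 0 < r∞ ≤ 1, a function σ satisfies the Mean-Field traffic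
equilibrium equations σ(x) = λ + ((1 − r∞)/A) · Σ_{y ∈ N(x)} σ(y) for all x
if and only if σ is the constant function λ/r∞. -/
theorem traffic_equilibrium_unique_solution
    {V : Type*} [Fintype V] [Nonempty V] (G : SimpleGraph V) [DecidableRel G.Adj]
    (A : ℕ) (hA : 1 ≤ A) (hreg : G.IsRegularOfDegree A)
    (lam rinf : ℝ) (hlam : 0 < lam) (hr0 : 0 < rinf) (hr1 : rinf ≤ 1)
    (σ : V → ℝ) :
    (∀ x : V, σ x = lam + ((1 - rinf) / A) * ∑ y ∈ G.neighborFinset x, σ y) ↔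
      (∀ x : V, σ x = lam / rinf) := by
  have hApos : (0 : ℝ) < A := by exact_mod_cast hA
  have hAne : (A : ℝ) ≠ 0 := ne_of_gt hApos
  have hcard : ∀ x : V, (G.neighborFinset x).card = A := hreg
  have hc : 0 ≤ (1 - rinf) / A := div_nonneg (by linarith) hApos.le
  constructor
  · intro heq
    -- max argument
    obtain ⟨x0, -, hx0⟩ := Finset.exists_max_image Finset.univ σ Finset.univ_nonempty
    obtain ⟨x1, -, hx1⟩ := Finset.exists_min_image Finset.univ σ Finset.univ_nonempty
    have hM : σ x0 ≤ lam / rinf := by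
      have hsum : ∑ y ∈ G.neighborFinset x0, σ y ≤ (A : ℝ) * σ x0 := by
        calc ∑ y ∈ G.neighborFinset x0, σ y
            ≤ ∑ _y ∈ G.neighborFinset x0, σ x0 :=
              Finset.sum_le_sum (fun y _ => hx0 y (Finset.mem_univ y))
          _ = (A : ℝ) * σ x0 := by
              rw [Finset.sum_const, hcard, nsmul_eq_mul]
      have h1 : σ x0 ≤ lam + (1 - rinf) * σ x0 := by
        calc σ x0 = lam + ((1 - rinf) / A) * ∑ y ∈ G.neighborFinset x0, σ y := heq x0
          _ ≤ lam + ((1 - rinf) / A) * ((A : ℝ) * σ x0) := by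
              have := mul_le_mul_of_nonneg_left hsum hc
              linarith
          _ = lam + (1 - rinf) * σ x0 := by field_simp
      have : rinf * σ x0 ≤ lam := by nlinarith
      rw [le_div_iff₀ hr0]; linarith
    have hm : lam / rinf ≤ σ x1 := by
      have hsum : (A : ℝ) * σ x1 ≤ ∑ y ∈ G.neighborFinset x1, σ y := by
        calc (A : ℝ) * σ x1 = ∑ _y ∈ G.neighborFinset x1, σ x1 := by
              rw [Finset.sum_const, hcard, nsmul_eq_mul]
          _ ≤ ∑ y ∈ G.neighborFinset x1, σ y :=
              Finset.sum_le_sum (fun y _ => hx1 y (Finset.mem_univ y))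
      have h1 : lam + (1 - rinf) * σ x1 ≤ σ x1 := by
        calc lam + (1 - rinf) * σ x1
            = lam + ((1 - rinf) / A) * ((A : ℝ) * σ x1) := by field_simp
          _ ≤ lam + ((1 - rinf) / A) * ∑ y ∈ G.neighborFinset x1, σ y := by
              have := mul_le_mul_of_nonneg_left hsum hc
              linarith
          _ = σ x1 := (heq x1).symm
      have : lam ≤ rinf * σ x1 := by nlinarith
      rw [div_le_iff₀ hr0]; linarith
    intro x
    have h1 : σ x ≤ lam / rinf := le_trans (hx0 x (Finset.mem_univ x)) hM
    have h2 : lam / rinf ≤ σ x := le_trans hm (hx1 x (Finset.mem_univ x))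
    linarith
  · intro hconst x
    rw [hconst x]
    have : ∑ y ∈ G.neighborFinset x, σ y = (A : ℝ) * (lam / rinf) := by
      rw [Finset.sum_congr rfl (fun y _ => hconst y), Finset.sum_const, hcard,
        nsmul_eq_mul]
    rw [this]
    field_simp; ring
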